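/- Consider the system (∂_t² − c_l²Δ)u^l = Σ_{i,j} Σ_{α,β,γ=0}^{3} G^{l,αβγ}_{ij} (∂_α u^i) ∂²_{βγ} u^j + Σ_{i,j} Σ_{α,β=0}^{3} H^{l,αβ}_{ij} (∂_α u^i) ∂_β u^j (l = 1,…,N) on (0,T) × ℝ³, with c_l > 0 and real constant coefficients. Then there exists ε* > 0, depending only on the speeds c_1,…,c_N and the coefficients G, H, with the following property: whenever u = (u^1,…,u^N) is a smooth solution of this system and (t,x) is a point at which max{ |Z̄^a ∂_α u^i(t,x)| : |a| ≤ 1, 0 ≤ α ≤ 3, 1 ≤ i ≤ N } ≤ ε*, then for every multi-index a with |a| ∈ {1,2}: Σ_{i=1}^N |Z̄^a ∂_t² u^i(t,x)| ≤ C Σ_{i=1}^N Σ_{1≤|b|≤|a|} ( Σ_{1≤m≤3, 0≤α≤3} |Z̄^b ∂_m ∂_α u^i(t,x)| + Σ_{α=0}^{3} |Z̄^b ∂_α u^i(t,x)| ), where C depends only on the speeds and the coefficients. -/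

import Mathlib

open MeasureTheory Real Set
open scoped ENNReal NNReal

noncomputable section

/-- Euclidean space ℝⁿ. -/
abbrev Esp (n : ℕ) := EuclideanSpace ℝ (Fin n)

/-- Time derivative ∂_t of a function of (t, x). -/
def dt' {n : ℕ} (f : ℝ → Esp n → ℝ) : ℝ → Esp n → ℝ :=
  fun t x => deriv (fun s => f s x) t

/-- Spatial partial derivative ∂_j of a function of (t, x). -/
def dx' {n : ℕ} (j : Fin n) (f : ℝ → Esp n → ℝ) : ℝ → Esp n → ℝ :=
  fun t x => fderiv ℝ (fun y => f t y) x (EuclideanSpace.single j 1)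

/-- ∂_α for α : Fin (n+1); α = 0 is the time derivative, α = j+1 is ∂_j. -/
def pd' {n : ℕ} (α : Fin (n + 1)) (f : ℝ → Esp n → ℝ) : ℝ → Esp n → ℝ :=
  Fin.cases (dt' f) (fun j => dx' j f) α

/-- Rotation generator Ω_{ij} = x_i ∂_j − x_j ∂_i. -/
def rot' {n : ℕ} (i j : Fin n) (f : ℝ → Esp n → ℝ) : ℝ → Esp n → ℝ :=
  fun t x => x i * dx' j f t x - x j * dx' i f t x

/-- Scaling operator S = t ∂_t + x · ∇. -/
def scl' {n : ℕ} (f : ℝ → Esp n → ℝ) : ℝ → Esp n → ℝ :=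
  fun t x => t * dt' f t x + ∑ j, x j * dx' j f t x

/-- Japanese bracket ⟨a⟩ = √(1 + a²). -/
def jap (a : ℝ) : ℝ := Real.sqrt (1 + a ^ 2)

/-- L² norm over ℝⁿ. -/
def L2n {n : ℕ} (g : Esp n → ℝ) : ℝ := Real.sqrt (∫ x, (g x) ^ 2)

/-- Lᵖ norm over ℝⁿ (p finite). -/
def Lpn {n : ℕ} (p : ℝ) (g : Esp n → ℝ) : ℝ := (∫ x, |g x| ^ p) ^ (1 / p)

/-- Energy E₁(v(t)) for speeds c. -/
def E1 {n N : ℕ} (c : Fin N → ℝ) (v : Fin N → ℝ → Esp n → ℝ) (t : ℝ) : ℝ :=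
  (1 / 2) * ∑ l, ∫ x, ((dt' (v l) t x) ^ 2 + (c l) ^ 2 * ∑ j, (dx' j (v l) t x) ^ 2)

/-- N₁(v(t)) = √E₁(v(t)). -/
def N1 {n N : ℕ} (c : Fin N → ℝ) (v : Fin N → ℝ → Esp n → ℝ) (t : ℝ) : ℝ :=
  Real.sqrt (E1 c v t)

/-- M₂(v(t)) = Σ_l Σ_{δ,j} ‖⟨c_l t − |x|⟩ ∂_δ ∂_j v^l(t)‖_{L²}. -/
def M2 {n N : ℕ} (c : Fin N → ℝ) (v : Fin N → ℝ → Esp n → ℝ) (t : ℝ) : ℝ :=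
  ∑ l, ∑ δ : Fin (n + 1), ∑ j : Fin n,
    L2n (fun x => jap (c l * t - ‖x‖) * pd' δ (dx' j (v l)) t x)

/-- Smoothness of all components of v, jointly in (t, x), for t in s. -/
def SmoothSTOn {n N : ℕ} (v : Fin N → ℝ → Esp n → ℝ) (s : Set ℝ) : Prop :=
  ∀ l, ContDiffOn ℝ (⊤ : ℕ∞) (fun p : ℝ × Esp n => v l p.1 p.2) (s ×ˢ (univ : Set (Esp n)))

/-- Compact support in x at each fixed time t ∈ s. -/
def CompactSupp {n N : ℕ} (v : Fin N → ℝ → Esp n → ℝ) (s : Set ℝ) : Prop :=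
  ∀ l, ∀ t ∈ s, HasCompactSupport (fun x => v l t x)

/-- Spherical Lᵖ norm of g on the sphere of radius r (w.r.t. the surface
measure on the unit sphere), i.e. ‖g(r·)‖_{L^p_ω(S^{n-1})}. -/
def sphLp {n : ℕ} (p : ℝ) (g : Esp n → ℝ) (r : ℝ) : ℝ :=
  (∫ ω : Metric.sphere (0 : Esp n) 1,
      |g (r • (ω : Esp n))| ^ p ∂((volume : Measure (Esp n)).toSphere)) ^ (1 / p)

/-- A single generator from Z̄ = {∂_j, Ω_{ij}} : either a spatial derivative or
a rotation. -/
def zg {n : ℕ} (g : Fin n ⊕ (Fin n × Fin n)) (f : ℝ → Esp n → ℝ) : ℝ → Esp n → ℝ :=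
  match g with
  | Sum.inl j => dx' j f
  | Sum.inr q => rot' q.1 q.2 f

/-- The wave operator ∂_t² − c²Δ. -/
def boxOp {n : ℕ} (cl : ℝ) (f : ℝ → Esp n → ℝ) : ℝ → Esp n → ℝ :=
  fun t x => dt' (dt' f) t x - cl ^ 2 * ∑ j, dx' j (dx' j f) t x

/-- u is a solution on (0,T) × ℝ³ of the quadratic quasi-linear system
(∂_t² − c_l²Δ)u^l = G^{l,αβγ}_{ij} (∂_α u^i) ∂²_{βγ} u^j + H^{l,αβ}_{ij} (∂_α u^i) ∂_β u^j. -/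
def IsSol3 {N : ℕ} (c : Fin N → ℝ)
    (G : Fin N → Fin N → Fin N → Fin 4 → Fin 4 → Fin 4 → ℝ)
    (H : Fin N → Fin N → Fin N → Fin 4 → Fin 4 → ℝ)
    (T : ℝ) (u : Fin N → ℝ → Esp 3 → ℝ) : Prop :=
  ∀ l, ∀ t ∈ Ioo (0 : ℝ) T, ∀ x,
    boxOp (c l) (u l) t x =
      (∑ i, ∑ j, ∑ α, ∑ β, ∑ γ,
        G l i j α β γ * pd' α (u i) t x * pd' β (pd' γ (u j)) t x)
      + ∑ i, ∑ j, ∑ α, ∑ β, H l i j α β * pd' α (u i) t x * pd' β (u j) t x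
section Infra

variable {n : ℕ}

/-- Uncurried version. -/
def F2 {n : ℕ} (f : ℝ → Esp n → ℝ) : ℝ × Esp n → ℝ := fun p => f p.1 p.2

lemma hasDerivAt_slice_t {f : ℝ → Esp n → ℝ} {t : ℝ} {x : Esp n}
    (hf : DifferentiableAt ℝ (F2 f) (t, x)) :
    HasDerivAt (fun s => f s x) (fderiv ℝ (F2 f) (t, x) (1, 0)) t := by
  have h1 : HasDerivAt (fun s : ℝ => ((s : ℝ), x)) ((1 : ℝ), (0 : Esp n)) t :=
    (hasDerivAt_id t).prodMk (hasDerivAt_const t x)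
  exact hf.hasFDerivAt.comp_hasDerivAt t h1

lemma dt'_eq {f : ℝ → Esp n → ℝ} {t : ℝ} {x : Esp n}
    (hf : DifferentiableAt ℝ (F2 f) (t, x)) :
    dt' f t x = fderiv ℝ (F2 f) (t, x) (1, 0) :=
  (hasDerivAt_slice_t hf).deriv

lemma hasFDerivAt_slice_x {f : ℝ → Esp n → ℝ} {t : ℝ} {x : Esp n}
    (hf : DifferentiableAt ℝ (F2 f) (t, x)) :
    HasFDerivAt (fun y => f t y)
      ((fderiv ℝ (F2 f) (t, x)).comp
        ((0 : Esp n →L[ℝ] ℝ).prod (ContinuousLinearMap.id ℝ (Esp n)))) x := by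
  have h1 : HasFDerivAt (fun y : Esp n => (t, y))
      ((0 : Esp n →L[ℝ] ℝ).prod (ContinuousLinearMap.id ℝ (Esp n))) x :=
    (hasFDerivAt_const t x).prodMk (hasFDerivAt_id x)
  exact hf.hasFDerivAt.comp x h1

lemma diff_slice_x {f : ℝ → Esp n → ℝ} {t : ℝ} {x : Esp n}
    (hf : DifferentiableAt ℝ (F2 f) (t, x)) :
    DifferentiableAt ℝ (fun y => f t y) x :=
  (hasFDerivAt_slice_x hf).differentiableAt

lemma dx'_eq {f : ℝ → Esp n → ℝ} {t : ℝ} {x : Esp n} (j : Fin n)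
    (hf : DifferentiableAt ℝ (F2 f) (t, x)) :
    dx' j f t x = fderiv ℝ (F2 f) (t, x) (0, EuclideanSpace.single j 1) := by
  rw [dx', (hasFDerivAt_slice_x hf).fderiv]
  simp

end Infra
section Infra2

variable {n : ℕ} {Ω : Set (ℝ × Esp n)} {f g : ℝ → Esp n → ℝ} {t : ℝ} {x : Esp n}

/-- Joint smoothness on Ω. -/
def SmOn {n : ℕ} (f : ℝ → Esp n → ℝ) (Ω : Set (ℝ × Esp n)) : Prop :=
  ContDiffOn ℝ (⊤ : ℕ∞) (F2 f) Ω

lemma SmOn.diffAt (hΩ : IsOpen Ω) (hf : SmOn f Ω) (hp : (t, x) ∈ Ω) :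
    DifferentiableAt ℝ (F2 f) (t, x) :=
  (hf.contDiffAt (hΩ.mem_nhds hp)).differentiableAt (by simp)

lemma SmOn.dslice (hΩ : IsOpen Ω) (hf : SmOn f Ω) (hp : (t, x) ∈ Ω) :
    DifferentiableAt ℝ (fun y => f t y) x :=
  diff_slice_x (hf.diffAt hΩ hp)

lemma SmOn.fderivSm (hΩ : IsOpen Ω) (hf : SmOn f Ω) :
    ContDiffOn ℝ (⊤ : ℕ∞) (fun p => fderiv ℝ (F2 f) p) Ω := by
  exact hf.fderiv_of_isOpen hΩ (by exact_mod_cast le_top)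

lemma SmOn.dt (hΩ : IsOpen Ω) (hf : SmOn f Ω) : SmOn (dt' f) Ω := by
  have h : ContDiffOn ℝ (⊤ : ℕ∞)
      (fun p => fderiv ℝ (F2 f) p ((1 : ℝ), (0 : Esp n))) Ω :=
    (hf.fderivSm hΩ).clm_apply contDiffOn_const
  exact h.congr fun p hp => by
    have := dt'_eq (f := f) (t := p.1) (x := p.2) (hf.diffAt hΩ (by simpa using hp))
    simpa [F2] using this

lemma SmOn.dx (hΩ : IsOpen Ω) (hf : SmOn f Ω) (j : Fin n) : SmOn (dx' j f) Ω := by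
  have h : ContDiffOn ℝ (⊤ : ℕ∞)
      (fun p => fderiv ℝ (F2 f) p ((0 : ℝ), EuclideanSpace.single j 1)) Ω :=
    (hf.fderivSm hΩ).clm_apply contDiffOn_const
  exact h.congr fun p hp => by
    have := dx'_eq (f := f) (t := p.1) (x := p.2) j (hf.diffAt hΩ (by simpa using hp))
    simpa [F2] using this

lemma SmOn.pd (hΩ : IsOpen Ω) (hf : SmOn f Ω) (α : Fin (n + 1)) : SmOn (pd' α f) Ω := by
  induction α using Fin.cases with
  | zero => simpa [pd'] using hf.dt hΩ
  | succ j => simpa [pd'] using hf.dx hΩ j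

lemma coordSm (i : Fin n) :
    ContDiff ℝ (⊤ : ℕ∞) (fun p : ℝ × Esp n => p.2 i) := by
  have : (fun p : ℝ × Esp n => p.2 i) =
      fun p : ℝ × Esp n => (EuclideanSpace.proj i : Esp n →L[ℝ] ℝ)
        ((ContinuousLinearMap.snd ℝ ℝ (Esp n)) p) := rfl
  rw [this]
  exact ((EuclideanSpace.proj i).contDiff).comp (ContinuousLinearMap.snd ℝ ℝ (Esp n)).contDiff

lemma SmOn.rot (hΩ : IsOpen Ω) (hf : SmOn f Ω) (i j : Fin n) : SmOn (rot' i j f) Ω := by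
  have h1 := ((coordSm (n := n) i).contDiffOn (s := Ω)).mul (hf.dx hΩ j)
  have h2 := ((coordSm (n := n) j).contDiffOn (s := Ω)).mul (hf.dx hΩ i)
  exact (h1.sub h2 : ContDiffOn ℝ (⊤ : ℕ∞) _ Ω)

lemma SmOn.zg (hΩ : IsOpen Ω) (hf : SmOn f Ω) (g : Fin n ⊕ (Fin n × Fin n)) :
    SmOn (zg g f) Ω := by
  cases g with
  | inl j => exact hf.dx hΩ j
  | inr q => exact hf.rot hΩ q.1 q.2

lemma SmOn.mul (hf : SmOn f Ω) (hg : SmOn g Ω) :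
    SmOn (fun t x => f t x * g t x) Ω := ContDiffOn.mul hf hg

lemma SmOn.constMul (hf : SmOn f Ω) (a : ℝ) :
    SmOn (fun t x => a * f t x) Ω := ContDiffOn.mul contDiffOn_const hf

lemma SmOn.finsum {ι : Type*} [Fintype ι] {F : ι → ℝ → Esp n → ℝ}
    (hF : ∀ i, SmOn (F i) Ω) :
    SmOn (fun t x => ∑ i, F i t x) Ω := by
  have : F2 (fun t x => ∑ i, F i t x) = fun p => ∑ i, F2 (F i) p := rfl
  rw [SmOn, this]
  exact ContDiffOn.sum fun i _ => hF i

end Infra2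
section Infra3

variable {n : ℕ} {Ω : Set (ℝ × Esp n)} {f g : ℝ → Esp n → ℝ} {t : ℝ} {x : Esp n}

lemma dx'_congr (j : Fin n) (h : ∀ y, f t y = g t y) : dx' j f t x = dx' j g t x := by
  unfold dx'
  rw [funext h]

lemma zg_congr (gg : Fin n ⊕ (Fin n × Fin n)) (h : ∀ y, f t y = g t y) :
    zg gg f t x = zg gg g t x := by
  cases gg with
  | inl j => exact dx'_congr j h
  | inr q =>
    simp only [zg, rot']
    rw [dx'_congr q.2 h, dx'_congr q.1 h]

lemma dx'_add (j : Fin n) (hf : DifferentiableAt ℝ (fun y => f t y) x)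
    (hg : DifferentiableAt ℝ (fun y => g t y) x) :
    dx' j (fun t x => f t x + g t x) t x = dx' j f t x + dx' j g t x := by
  simp only [dx']
  rw [fderiv_fun_add hf hg]
  simp

lemma dx'_mul (j : Fin n) (hf : DifferentiableAt ℝ (fun y => f t y) x)
    (hg : DifferentiableAt ℝ (fun y => g t y) x) :
    dx' j (fun t x => f t x * g t x) t x
      = dx' j f t x * g t x + f t x * dx' j g t x := by
  simp only [dx']
  rw [fderiv_fun_mul hf hg]
  simp
  ring

lemma dx'_const_mul (j : Fin n) (a : ℝ) (hf : DifferentiableAt ℝ (fun y => f t y) x) :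
    dx' j (fun t x => a * f t x) t x = a * dx' j f t x := by
  simp only [dx']
  rw [fderiv_const_mul hf]
  simp

lemma dx'_finsum {ι : Type*} [Fintype ι] (j : Fin n) {F : ι → ℝ → Esp n → ℝ}
    (hF : ∀ i, DifferentiableAt ℝ (fun y => F i t y) x) :
    dx' j (fun t x => ∑ i, F i t x) t x = ∑ i, dx' j (F i) t x := by
  simp only [dx']
  rw [fderiv_fun_sum fun i _ => hF i]
  simp

lemma zg_add (gg : Fin n ⊕ (Fin n × Fin n)) (hf : DifferentiableAt ℝ (fun y => f t y) x)
    (hg : DifferentiableAt ℝ (fun y => g t y) x) :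
    zg gg (fun t x => f t x + g t x) t x = zg gg f t x + zg gg g t x := by
  cases gg with
  | inl j => exact dx'_add j hf hg
  | inr q =>
    simp only [zg, rot']
    rw [dx'_add q.2 hf hg, dx'_add q.1 hf hg]
    ring

lemma zg_mul (gg : Fin n ⊕ (Fin n × Fin n)) (hf : DifferentiableAt ℝ (fun y => f t y) x)
    (hg : DifferentiableAt ℝ (fun y => g t y) x) :
    zg gg (fun t x => f t x * g t x) t x
      = zg gg f t x * g t x + f t x * zg gg g t x := by
  cases gg with
  | inl j => exact dx'_mul j hf hg
  | inr q =>
    simp only [zg, rot']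
    rw [dx'_mul q.2 hf hg, dx'_mul q.1 hf hg]
    ring

lemma zg_const_mul (gg : Fin n ⊕ (Fin n × Fin n)) (a : ℝ)
    (hf : DifferentiableAt ℝ (fun y => f t y) x) :
    zg gg (fun t x => a * f t x) t x = a * zg gg f t x := by
  cases gg with
  | inl j => exact dx'_const_mul j a hf
  | inr q =>
    simp only [zg, rot']
    rw [dx'_const_mul q.2 a hf, dx'_const_mul q.1 a hf]
    ring

lemma zg_finsum {ι : Type*} [Fintype ι] (gg : Fin n ⊕ (Fin n × Fin n))
    {F : ι → ℝ → Esp n → ℝ}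
    (hF : ∀ i, DifferentiableAt ℝ (fun y => F i t y) x) :
    zg gg (fun t x => ∑ i, F i t x) t x = ∑ i, zg gg (F i) t x := by
  cases gg with
  | inl j => exact dx'_finsum j hF
  | inr q =>
    simp only [zg, rot']
    rw [dx'_finsum q.2 hF, dx'_finsum q.1 hF]
    rw [Finset.mul_sum, Finset.mul_sum, ← Finset.sum_sub_distrib]

/-- Commutation of ∂_t and ∂_j at points of joint smoothness. -/
lemma dt_dx_comm (hΩ : IsOpen Ω) (hf : SmOn f Ω) (j : Fin n) (hp : (t, x) ∈ Ω) :
    dt' (dx' j f) t x = dx' j (dt' f) t x := by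
  set Df := fun p => fderiv ℝ (F2 f) p with hDf
  have hDfSm : ContDiffOn ℝ (⊤ : ℕ∞) Df Ω := hf.fderivSm hΩ
  have hDfdiff : DifferentiableAt ℝ Df (t, x) :=
    ((hDfSm.contDiffAt (hΩ.mem_nhds hp)).differentiableAt (by simp))
  have hev : ∀ᶠ p in nhds (t, x), HasFDerivAt (F2 f) (Df p) p := by
    filter_upwards [hΩ.mem_nhds hp] with p hp'
    exact (hf.diffAt hΩ (by simpa using hp')).hasFDerivAt
  have symm := second_derivative_symmetric_of_eventually hev hDfdiff.hasFDerivAt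
  -- identify both sides
  have e1 : ∀ v : ℝ × Esp n, HasFDerivAt (fun p => Df p v)
      ((fderiv ℝ Df (t, x)).flip v) (t, x) := by
    intro v
    have := hDfdiff.hasFDerivAt.clm_apply (hasFDerivAt_const v (t, x))
    simpa using this
  have key : ∀ v w : ℝ × Esp n, fderiv ℝ (fun p => Df p v) (t, x) w
      = fderiv ℝ Df (t, x) w v := by
    intro v w
    rw [(e1 v).fderiv]; rfl
  -- left side
  have hL : dt' (dx' j f) t x
      = fderiv ℝ (fun p => Df p ((0 : ℝ), EuclideanSpace.single j 1)) (t, x) (1, 0) := by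
    rw [dt'_eq ((hf.dx hΩ j).diffAt hΩ hp)]
    have hEq : F2 (dx' j f) =ᶠ[nhds (t, x)]
        fun p => Df p ((0 : ℝ), EuclideanSpace.single j 1) := by
      filter_upwards [hΩ.mem_nhds hp] with p hp'
      exact dx'_eq j (hf.diffAt hΩ (by simpa using hp'))
    rw [hEq.fderiv_eq]
  have hR : dx' j (dt' f) t x
      = fderiv ℝ (fun p => Df p ((1 : ℝ), (0 : Esp n))) (t, x) (0, EuclideanSpace.single j 1) := by
    rw [dx'_eq j ((hf.dt hΩ).diffAt hΩ hp)]
    have hEq : F2 (dt' f) =ᶠ[nhds (t, x)]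
        fun p => Df p ((1 : ℝ), (0 : Esp n)) := by
      filter_upwards [hΩ.mem_nhds hp] with p hp'
      exact dt'_eq (hf.diffAt hΩ (by simpa using hp'))
    rw [hEq.fderiv_eq]
  rw [hL, hR, key, key]
  exact symm _ _

end Infra3
section Infra4

variable {n : ℕ} {s : Set ℝ} {t : ℝ} {x : Esp n}

lemma mem_prod_univ (ht : t ∈ s) (y : Esp n) : ((t, y) : ℝ × Esp n) ∈ s ×ˢ (univ : Set (Esp n)) := by
  simp [ht]

/-- Leibniz rule for zg on a sum of quadratic terms. -/
lemma zg_quad (hs : IsOpen s) (ht : t ∈ s) (gg : Fin n ⊕ (Fin n × Fin n))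
    {ι : Type*} [Fintype ι] (co : ι → ℝ) (A B : ι → ℝ → Esp n → ℝ)
    (hA : ∀ i, SmOn (A i) (s ×ˢ univ)) (hB : ∀ i, SmOn (B i) (s ×ˢ univ)) :
    zg gg (fun t x => ∑ i, co i * (A i t x * B i t x)) t x
      = (∑ i, co i * (zg gg (A i) t x * B i t x))
        + ∑ i, co i * (A i t x * zg gg (B i) t x) := by
  have hΩ : IsOpen (s ×ˢ (univ : Set (Esp n))) := hs.prod isOpen_univ
  have hp : (t, x) ∈ s ×ˢ (univ : Set (Esp n)) := mem_prod_univ ht x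
  have dA : ∀ i, DifferentiableAt ℝ (fun y => A i t y) x := fun i => (hA i).dslice hΩ hp
  have dB : ∀ i, DifferentiableAt ℝ (fun y => B i t y) x := fun i => (hB i).dslice hΩ hp
  rw [zg_finsum gg (fun i => (((dA i).mul (dB i)).const_mul (co i)))]
  rw [← Finset.sum_add_distrib]
  refine Finset.sum_congr rfl fun i _ => ?_
  have h1 : zg gg (fun t x => co i * (A i t x * B i t x)) t x
      = co i * zg gg (fun t x => A i t x * B i t x) t x :=
    zg_const_mul gg (co i) ((dA i).mul (dB i))
  rw [h1, zg_mul gg (dA i) (dB i)]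
  ring

/-- Master Leibniz expansion for zg applied to the RHS shape of the system. -/
lemma zg_master (hs : IsOpen s) (ht : t ∈ s) (gg : Fin n ⊕ (Fin n × Fin n))
    {ι κ : Type*} [Fintype ι] [Fintype κ]
    (a : ℝ) (V : Fin n → ℝ → Esp n → ℝ)
    (co : ι → ℝ) (A B : ι → ℝ → Esp n → ℝ)
    (co' : κ → ℝ) (A' B' : κ → ℝ → Esp n → ℝ)
    (hV : ∀ m, SmOn (V m) (s ×ˢ univ))
    (hA : ∀ i, SmOn (A i) (s ×ˢ univ)) (hB : ∀ i, SmOn (B i) (s ×ˢ univ))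
    (hA' : ∀ k, SmOn (A' k) (s ×ˢ univ)) (hB' : ∀ k, SmOn (B' k) (s ×ˢ univ)) :
    zg gg (fun t x => a * (∑ m, V m t x)
        + ((∑ i, co i * (A i t x * B i t x)) + ∑ k, co' k * (A' k t x * B' k t x))) t x
      = a * (∑ m, zg gg (V m) t x)
        + (((∑ i, co i * (zg gg (A i) t x * B i t x))
            + ∑ i, co i * (A i t x * zg gg (B i) t x))
          + ((∑ k, co' k * (zg gg (A' k) t x * B' k t x))
            + ∑ k, co' k * (A' k t x * zg gg (B' k) t x))) := by
  have hΩ : IsOpen (s ×ˢ (univ : Set (Esp n))) := hs.prod isOpen_univ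
  have hp : (t, x) ∈ s ×ˢ (univ : Set (Esp n)) := mem_prod_univ ht x
  have dV : ∀ m, DifferentiableAt ℝ (fun y => V m t y) x := fun m => (hV m).dslice hΩ hp
  have dA : ∀ i, DifferentiableAt ℝ (fun y => A i t y) x := fun i => (hA i).dslice hΩ hp
  have dB : ∀ i, DifferentiableAt ℝ (fun y => B i t y) x := fun i => (hB i).dslice hΩ hp
  have dA' : ∀ k, DifferentiableAt ℝ (fun y => A' k t y) x := fun k => (hA' k).dslice hΩ hp
  have dB' : ∀ k, DifferentiableAt ℝ (fun y => B' k t y) x := fun k => (hB' k).dslice hΩ hp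
  have d1 : DifferentiableAt ℝ (fun y => a * (∑ m, V m t y)) x :=
    (DifferentiableAt.fun_sum fun m _ => dV m).const_mul a
  have d2 : DifferentiableAt ℝ (fun y => ∑ i, co i * (A i t y * B i t y)) x :=
    DifferentiableAt.fun_sum fun i _ => ((dA i).mul (dB i)).const_mul (co i)
  have d3 : DifferentiableAt ℝ (fun y => ∑ k, co' k * (A' k t y * B' k t y)) x :=
    DifferentiableAt.fun_sum fun k _ => ((dA' k).mul (dB' k)).const_mul (co' k)
  rw [zg_add gg d1 (d2.add d3), zg_add gg d2 d3,
    zg_const_mul gg a (DifferentiableAt.fun_sum fun m _ => dV m),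
    zg_finsum gg dV,
    zg_quad hs ht gg co A B hA hB, zg_quad hs ht gg co' A' B' hA' hB']

/-- Bound a sum of quadratic terms by uniform bounds on the factors. -/
lemma sum_quad_bound {ι : Type*} [Fintype ι] (co a b : ι → ℝ) {Ma Mb : ℝ}
    (ha : ∀ i, |a i| ≤ Ma) (hb : ∀ i, |b i| ≤ Mb) (hMb : 0 ≤ Mb) :
    |∑ i, co i * (a i * b i)| ≤ (∑ i, |co i|) * (Ma * Mb) := by
  calc |∑ i, co i * (a i * b i)| ≤ ∑ i, |co i * (a i * b i)| :=
        Finset.abs_sum_le_sum_abs _ _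
    _ ≤ ∑ i, |co i| * (Ma * Mb) := by
        refine Finset.sum_le_sum fun i _ => ?_
        rw [abs_mul, abs_mul]
        refine mul_le_mul_of_nonneg_left ?_ (abs_nonneg _)
        exact mul_le_mul (ha i) (hb i) (abs_nonneg _) ((abs_nonneg _).trans (ha i))
    _ = (∑ i, |co i|) * (Ma * Mb) := by rw [Finset.sum_mul]

lemma single_le_sum2 {A B : Type*} [Fintype A] [Fintype B] (f : A → B → ℝ)
    (h : ∀ a b, 0 ≤ f a b) (a : A) (b : B) : f a b ≤ ∑ a, ∑ b, f a b := by
  calc f a b ≤ ∑ b, f a b := Finset.single_le_sum (fun b _ => h a b) (Finset.mem_univ b)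
    _ ≤ ∑ a, ∑ b, f a b :=
        Finset.single_le_sum (f := fun a => ∑ b, f a b)
          (fun a _ => Finset.sum_nonneg fun b _ => h a b) (Finset.mem_univ a)

lemma single_le_sum3 {A B C : Type*} [Fintype A] [Fintype B] [Fintype C] (f : A → B → C → ℝ)
    (h : ∀ a b c, 0 ≤ f a b c) (a : A) (b : B) (c : C) :
    f a b c ≤ ∑ a, ∑ b, ∑ c, f a b c := by
  calc f a b c ≤ ∑ c, f a b c := Finset.single_le_sum (fun c _ => h a b c) (Finset.mem_univ c)
    _ ≤ ∑ a, ∑ b, ∑ c, f a b c :=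
        single_le_sum2 (fun a b => ∑ c, f a b c)
          (fun a b => Finset.sum_nonneg fun c _ => h a b c) a b

end Infra4
section MainAux

abbrev QIx (N : ℕ) := Fin N × Fin N × Fin 4 × Fin 4 × Fin 4
abbrev HIx (N : ℕ) := Fin N × Fin N × Fin 4 × Fin 4

def Gco {N : ℕ} (G : Fin N → Fin N → Fin N → Fin 4 → Fin 4 → Fin 4 → ℝ) (l : Fin N)
    (q : QIx N) : ℝ := G l q.1 q.2.1 q.2.2.1 q.2.2.2.1 q.2.2.2.2

def Hco {N : ℕ} (H : Fin N → Fin N → Fin N → Fin 4 → Fin 4 → ℝ) (l : Fin N)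
    (r : HIx N) : ℝ := H l r.1 r.2.1 r.2.2.1 r.2.2.2

def AqF {N : ℕ} (u : Fin N → ℝ → Esp 3 → ℝ) (q : QIx N) : ℝ → Esp 3 → ℝ :=
  pd' q.2.2.1 (u q.1)

def BqF {N : ℕ} (u : Fin N → ℝ → Esp 3 → ℝ) (q : QIx N) : ℝ → Esp 3 → ℝ :=
  pd' q.2.2.2.1 (pd' q.2.2.2.2 (u q.2.1))

def ArF {N : ℕ} (u : Fin N → ℝ → Esp 3 → ℝ) (r : HIx N) : ℝ → Esp 3 → ℝ :=
  pd' r.2.2.1 (u r.1)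

def BrF {N : ℕ} (u : Fin N → ℝ → Esp 3 → ℝ) (r : HIx N) : ℝ → Esp 3 → ℝ :=
  pd' r.2.2.2 (u r.2.1)

lemma pd'_zero {n : ℕ} (f : ℝ → Esp n → ℝ) : pd' (0 : Fin (n + 1)) f = dt' f := by
  simp [pd']

lemma pd'_succ {n : ℕ} (m : Fin n) (f : ℝ → Esp n → ℝ) : pd' m.succ f = dx' m f := by
  simp [pd']

variable {N : ℕ} {c : Fin N → ℝ}
  {G : Fin N → Fin N → Fin N → Fin 4 → Fin 4 → Fin 4 → ℝ}
  {H : Fin N → Fin N → Fin N → Fin 4 → Fin 4 → ℝ}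
  {T : ℝ} {u : Fin N → ℝ → Esp 3 → ℝ}

lemma sol_flat (hsol : IsSol3 c G H T u) (l : Fin N) {t : ℝ} (ht : t ∈ Ioo (0:ℝ) T)
    (x : Esp 3) :
    dt' (dt' (u l)) t x
      = (c l)^2 * (∑ m, dx' m (dx' m (u l)) t x)
        + ((∑ q : QIx N, Gco G l q * (AqF u q t x * BqF u q t x))
          + ∑ r : HIx N, Hco H l r * (ArF u r t x * BrF u r t x)) := by
  have h := hsol l t ht x
  simp only [boxOp] at h
  have hG : (∑ q : QIx N, Gco G l q * (AqF u q t x * BqF u q t x))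
      = ∑ i, ∑ j, ∑ α, ∑ β, ∑ γ,
          G l i j α β γ * pd' α (u i) t x * pd' β (pd' γ (u j)) t x := by
    simp [Fintype.sum_prod_type, Gco, AqF, BqF, mul_assoc]
  have hH : (∑ r : HIx N, Hco H l r * (ArF u r t x * BrF u r t x))
      = ∑ i, ∑ j, ∑ α, ∑ β, H l i j α β * pd' α (u i) t x * pd' β (u j) t x := by
    simp [Fintype.sum_prod_type, Hco, ArF, BrF, mul_assoc]
  rw [hG, hH]
  linarith [h]

end MainAux
section MainExp

variable {N : ℕ} {c : Fin N → ℝ}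
  {G : Fin N → Fin N → Fin N → Fin 4 → Fin 4 → Fin 4 → ℝ}
  {H : Fin N → Fin N → Fin N → Fin 4 → Fin 4 → ℝ}
  {T : ℝ} {u : Fin N → ℝ → Esp 3 → ℝ}

lemma expand1 (hsm : SmoothSTOn u (Ioo 0 T)) (hsol : IsSol3 c G H T u)
    {t : ℝ} (ht : t ∈ Ioo (0:ℝ) T) (gg : Fin 3 ⊕ (Fin 3 × Fin 3)) (l : Fin N) (y : Esp 3) :
    zg gg (dt' (dt' (u l))) t y
      = (c l)^2 * (∑ m, zg gg (dx' m (dx' m (u l))) t y)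
        + (((∑ q : QIx N, Gco G l q * (zg gg (AqF u q) t y * BqF u q t y))
            + ∑ q : QIx N, Gco G l q * (AqF u q t y * zg gg (BqF u q) t y))
          + ((∑ r : HIx N, Hco H l r * (zg gg (ArF u r) t y * BrF u r t y))
            + ∑ r : HIx N, Hco H l r * (ArF u r t y * zg gg (BrF u r) t y))) := by
  have hs : IsOpen (Ioo (0:ℝ) T) := isOpen_Ioo
  have hΩ : IsOpen ((Ioo (0:ℝ) T) ×ˢ (univ : Set (Esp 3))) := hs.prod isOpen_univ
  have hu : ∀ l, SmOn (u l) ((Ioo (0:ℝ) T) ×ˢ univ) := fun l => hsm l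
  have hcongr : ∀ z : Esp 3, dt' (dt' (u l)) t z
      = (fun t x => (c l)^2 * (∑ m, dx' m (dx' m (u l)) t x)
        + ((∑ q : QIx N, Gco G l q * (AqF u q t x * BqF u q t x))
          + ∑ r : HIx N, Hco H l r * (ArF u r t x * BrF u r t x))) t z :=
    fun z => sol_flat hsol l ht z
  refine (zg_congr (g := fun t x => (c l)^2 * (∑ m, dx' m (dx' m (u l)) t x)
        + ((∑ q : QIx N, Gco G l q * (AqF u q t x * BqF u q t x))
          + ∑ r : HIx N, Hco H l r * (ArF u r t x * BrF u r t x))) gg hcongr).trans ?_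
  exact zg_master hs ht gg ((c l)^2) (fun m => dx' m (dx' m (u l)))
    (Gco G l) (AqF u) (BqF u) (Hco H l) (ArF u) (BrF u)
    (fun m => ((hu l).dx hΩ m).dx hΩ m)
    (fun q => (hu q.1).pd hΩ q.2.2.1)
    (fun q => ((hu q.2.1).pd hΩ q.2.2.2.2).pd hΩ q.2.2.2.1)
    (fun r => (hu r.1).pd hΩ r.2.2.1)
    (fun r => (hu r.2.1).pd hΩ r.2.2.2)

lemma expand2 (hsm : SmoothSTOn u (Ioo 0 T)) (hsol : IsSol3 c G H T u)
    {t : ℝ} (ht : t ∈ Ioo (0:ℝ) T) (g₁ g₂ : Fin 3 ⊕ (Fin 3 × Fin 3)) (l : Fin N) (y : Esp 3) :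
    zg g₁ (zg g₂ (dt' (dt' (u l)))) t y
      = (c l)^2 * (∑ m, zg g₁ (zg g₂ (dx' m (dx' m (u l)))) t y)
        + ((((∑ q : QIx N, Gco G l q * (zg g₁ (zg g₂ (AqF u q)) t y * BqF u q t y))
            + ∑ q : QIx N, Gco G l q * (zg g₁ (AqF u q) t y * zg g₂ (BqF u q) t y))
          + ((∑ q : QIx N, Gco G l q * (zg g₂ (AqF u q) t y * zg g₁ (BqF u q) t y))
            + ∑ q : QIx N, Gco G l q * (AqF u q t y * zg g₁ (zg g₂ (BqF u q)) t y)))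
        + (((∑ r : HIx N, Hco H l r * (zg g₁ (zg g₂ (ArF u r)) t y * BrF u r t y))
            + ∑ r : HIx N, Hco H l r * (zg g₁ (ArF u r) t y * zg g₂ (BrF u r) t y))
          + ((∑ r : HIx N, Hco H l r * (zg g₂ (ArF u r) t y * zg g₁ (BrF u r) t y))
            + ∑ r : HIx N, Hco H l r * (ArF u r t y * zg g₁ (zg g₂ (BrF u r)) t y)))) := by
  have hs : IsOpen (Ioo (0:ℝ) T) := isOpen_Ioo
  have hΩ : IsOpen ((Ioo (0:ℝ) T) ×ˢ (univ : Set (Esp 3))) := hs.prod isOpen_univ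
  have hu : ∀ l, SmOn (u l) ((Ioo (0:ℝ) T) ×ˢ univ) := fun l => hsm l
  have hAq : ∀ q : QIx N, SmOn (AqF u q) ((Ioo (0:ℝ) T) ×ˢ univ) :=
    fun q => (hu q.1).pd hΩ q.2.2.1
  have hBq : ∀ q : QIx N, SmOn (BqF u q) ((Ioo (0:ℝ) T) ×ˢ univ) :=
    fun q => ((hu q.2.1).pd hΩ q.2.2.2.2).pd hΩ q.2.2.2.1
  have hAr : ∀ r : HIx N, SmOn (ArF u r) ((Ioo (0:ℝ) T) ×ˢ univ) :=
    fun r => (hu r.1).pd hΩ r.2.2.1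
  have hBr : ∀ r : HIx N, SmOn (BrF u r) ((Ioo (0:ℝ) T) ×ˢ univ) :=
    fun r => (hu r.2.1).pd hΩ r.2.2.2
  -- sum-type families
  set co2 : QIx N ⊕ QIx N → ℝ := Sum.elim (Gco G l) (Gco G l) with hco2
  set A2 : QIx N ⊕ QIx N → ℝ → Esp 3 → ℝ :=
    Sum.elim (fun q => zg g₂ (AqF u q)) (AqF u) with hA2
  set B2 : QIx N ⊕ QIx N → ℝ → Esp 3 → ℝ :=
    Sum.elim (BqF u) (fun q => zg g₂ (BqF u q)) with hB2
  set co3 : HIx N ⊕ HIx N → ℝ := Sum.elim (Hco H l) (Hco H l) with hco3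
  set A3 : HIx N ⊕ HIx N → ℝ → Esp 3 → ℝ :=
    Sum.elim (fun r => zg g₂ (ArF u r)) (ArF u) with hA3
  set B3 : HIx N ⊕ HIx N → ℝ → Esp 3 → ℝ :=
    Sum.elim (BrF u) (fun r => zg g₂ (BrF u r)) with hB3
  have hcongr : ∀ z : Esp 3, zg g₂ (dt' (dt' (u l))) t z
      = (fun t x => (c l)^2 * (∑ m, zg g₂ (dx' m (dx' m (u l))) t x)
        + ((∑ p : QIx N ⊕ QIx N, co2 p * (A2 p t x * B2 p t x))
          + ∑ p : HIx N ⊕ HIx N, co3 p * (A3 p t x * B3 p t x))) t z := by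
    intro z
    refine (expand1 hsm hsol ht g₂ l z).trans ?_
    simp only [Fintype.sum_sum_type, hco2, hA2, hB2, hco3, hA3, hB3, Sum.elim_inl, Sum.elim_inr]
  refine (zg_congr (g := fun t x => (c l)^2 * (∑ m, zg g₂ (dx' m (dx' m (u l))) t x)
        + ((∑ p : QIx N ⊕ QIx N, co2 p * (A2 p t x * B2 p t x))
          + ∑ p : HIx N ⊕ HIx N, co3 p * (A3 p t x * B3 p t x))) g₁ hcongr).trans ?_
  have key := zg_master (x := y) hs ht g₁ ((c l)^2) (fun m => zg g₂ (dx' m (dx' m (u l))))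
    co2 A2 B2 co3 A3 B3
    (fun m => (((hu l).dx hΩ m).dx hΩ m).zg hΩ g₂)
    (fun p => by cases p with
      | inl q => exact (hAq q).zg hΩ g₂
      | inr q => exact hAq q)
    (fun p => by cases p with
      | inl q => exact hBq q
      | inr q => exact (hBq q).zg hΩ g₂)
    (fun p => by cases p with
      | inl r => exact (hAr r).zg hΩ g₂
      | inr r => exact hAr r)
    (fun p => by cases p with
      | inl r => exact hBr r
      | inr r => exact (hBr r).zg hΩ g₂)
  refine key.trans ?_
  simp only [Fintype.sum_sum_type, hco2, hA2, hB2, hco3, hA3, hB3, Sum.elim_inl, Sum.elim_inr]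

end MainExp
lemma abs_add5 (a b c d e : ℝ) : |a + ((b + c) + (d + e))| ≤ |a| + (|b| + |c| + (|d| + |e|)) := by
  have h1 := abs_add_le a ((b + c) + (d + e))
  have h2 := abs_add_le (b + c) (d + e)
  have h3 := abs_add_le b c
  have h4 := abs_add_le d e
  linarith

lemma abs_add9 (a b c d e f g h i : ℝ) :
    |a + (((b + c) + (d + e)) + ((f + g) + (h + i)))|
      ≤ |a| + (((|b| + |c|) + (|d| + |e|)) + ((|f| + |g|) + (|h| + |i|))) := by
  have h1 := abs_add_le a (((b + c) + (d + e)) + ((f + g) + (h + i)))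
  have h2 := abs_add_le ((b + c) + (d + e)) ((f + g) + (h + i))
  have h3 := abs_add_le (b + c) (d + e)
  have h4 := abs_add_le (f + g) (h + i)
  have h5 := abs_add_le b c
  have h6 := abs_add_le d e
  have h7 := abs_add_le f g
  have h8 := abs_add_le h i
  linarith

set_option maxHeartbeats 3200000 in
theorem stmt_12' :
    ∀ (N : ℕ) (c : Fin N → ℝ)
      (G : Fin N → Fin N → Fin N → Fin 4 → Fin 4 → Fin 4 → ℝ)
      (H : Fin N → Fin N → Fin N → Fin 4 → Fin 4 → ℝ),
      (∀ l, 0 < c l) →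
      ∃ εs > (0 : ℝ), ∃ C > (0 : ℝ),
        ∀ (T : ℝ) (u : Fin N → ℝ → Esp 3 → ℝ),
          SmoothSTOn u (Ioo 0 T) → IsSol3 c G H T u →
          ∀ t ∈ Ioo (0 : ℝ) T, ∀ x : Esp 3,
            ((∀ (i : Fin N) (α : Fin 4), |pd' α (u i) t x| ≤ εs) ∧
             (∀ (i : Fin N) (α : Fin 4) (g : Fin 3 ⊕ (Fin 3 × Fin 3)),
               |zg g (pd' α (u i)) t x| ≤ εs)) →
            (∀ g₁ : Fin 3 ⊕ (Fin 3 × Fin 3),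
              (∑ i, |zg g₁ (dt' (dt' (u i))) t x|)
                ≤ C * ∑ i, ∑ g : Fin 3 ⊕ (Fin 3 × Fin 3),
                    ((∑ m : Fin 3, ∑ α : Fin 4, |zg g (dx' m (pd' α (u i))) t x|)
                      + ∑ α : Fin 4, |zg g (pd' α (u i)) t x|)) ∧
            (∀ g₁ g₂ : Fin 3 ⊕ (Fin 3 × Fin 3),
              (∑ i, |zg g₁ (zg g₂ (dt' (dt' (u i)))) t x|)
                ≤ C * ∑ i,
                    ((∑ g : Fin 3 ⊕ (Fin 3 × Fin 3),
                        ((∑ m : Fin 3, ∑ α : Fin 4, |zg g (dx' m (pd' α (u i))) t x|)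
                          + ∑ α : Fin 4, |zg g (pd' α (u i)) t x|))
                     + ∑ g : Fin 3 ⊕ (Fin 3 × Fin 3), ∑ g' : Fin 3 ⊕ (Fin 3 × Fin 3),
                        ((∑ m : Fin 3, ∑ α : Fin 4,
                            |zg g (zg g' (dx' m (pd' α (u i)))) t x|)
                          + ∑ α : Fin 4, |zg g (zg g' (pd' α (u i))) t x|))) := by
  intro N c G H hc
  classical
  obtain ⟨KC, hKCdef⟩ : ∃ y : ℝ, y = ∑ l, (c l)^2 := ⟨_, rfl⟩
  obtain ⟨KG, hKGdef⟩ : ∃ y : ℝ, y = ∑ l, ∑ q : QIx N, |Gco G l q| := ⟨_, rfl⟩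
  obtain ⟨KH, hKHdef⟩ : ∃ y : ℝ, y = ∑ l, ∑ r : HIx N, |Hco H l r| := ⟨_, rfl⟩
  obtain ⟨K, hKdef⟩ : ∃ y : ℝ, y = KC + KG + KH + 1 := ⟨_, rfl⟩
  have hKC0 : 0 ≤ KC := hKCdef ▸ Finset.sum_nonneg fun l _ => sq_nonneg _
  have hKG0 : 0 ≤ KG := hKGdef ▸
    Finset.sum_nonneg fun l _ => Finset.sum_nonneg fun q _ => abs_nonneg _
  have hKH0 : 0 ≤ KH := hKHdef ▸
    Finset.sum_nonneg fun l _ => Finset.sum_nonneg fun r _ => abs_nonneg _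
  have hK1 : 1 ≤ K := by rw [hKdef]; linarith
  have hK0 : (0:ℝ) < K := by linarith
  obtain ⟨ε, hεdef⟩ : ∃ y : ℝ, y = 1/(8*K) := ⟨_, rfl⟩
  have hε0 : 0 < ε := by rw [hεdef]; positivity
  have hKε : K * ε = 1/8 := by
    rw [hεdef, mul_one_div, div_eq_div_iff (by positivity) (by norm_num : (8:ℝ) ≠ 0)]
    ring
  have hε1 : ε ≤ 1 := by
    rw [hεdef, div_le_one (by positivity)]; linarith
  have hKCε : KC * ε ≤ 1/8 := by
    calc KC * ε ≤ K * ε := mul_le_mul_of_nonneg_right (by linarith) hε0.le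
      _ = 1/8 := hKε
  have hKGε : KG * ε ≤ 1/8 := by
    calc KG * ε ≤ K * ε := mul_le_mul_of_nonneg_right (by linarith) hε0.le
      _ = 1/8 := hKε
  have hKHε : KH * ε ≤ 1/8 := by
    calc KH * ε ≤ K * ε := mul_le_mul_of_nonneg_right (by linarith) hε0.le
      _ = 1/8 := hKε
  refine ⟨ε, hε0, 16*K, by positivity, ?_⟩
  intro T u hsm hsol t ht x hsmall
  obtain ⟨hA1, hA2⟩ := hsmall
  have hs : IsOpen (Ioo (0:ℝ) T) := isOpen_Ioo
  have hΩ : IsOpen ((Ioo (0:ℝ) T) ×ˢ (univ : Set (Esp 3))) := hs.prod isOpen_univ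
  have hu : ∀ l, SmOn (u l) ((Ioo (0:ℝ) T) ×ˢ univ) := fun l => hsm l
  have hpt : ∀ y : Esp 3, ((t, y) : ℝ × Esp 3) ∈ (Ioo (0:ℝ) T) ×ˢ univ :=
    fun y => mem_prod_univ ht y
  -- small bound on pure spatial-mixed second derivatives
  have hdd : ∀ (i : Fin N) (m : Fin 3) (α : Fin 4), |dx' m (pd' α (u i)) t x| ≤ ε := by
    intro i m α
    have h := hA2 i α (Sum.inl m)
    simpa [zg] using h
  -- |∂β ∂γ u| ≤ ε + |∂t² u|
  have hBval : ∀ (j : Fin N) (β γ : Fin 4),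
      |pd' β (pd' γ (u j)) t x| ≤ ε + |dt' (dt' (u j)) t x| := by
    intro j β γ
    induction β using Fin.cases with
    | zero =>
      rw [pd'_zero]
      induction γ using Fin.cases with
      | zero =>
        rw [pd'_zero]
        linarith [abs_nonneg (dt' (dt' (u j)) t x)]
      | succ m =>
        rw [pd'_succ]
        rw [dt_dx_comm hΩ (hu j) m (hpt x)]
        have h := hdd j m 0
        rw [pd'_zero] at h
        linarith [abs_nonneg (dt' (dt' (u j)) t x)]
    | succ m =>
      rw [pd'_succ]
      have h := hdd j m γ
      linarith [abs_nonneg (dt' (dt' (u j)) t x)]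
  -- bound on Σ |∂t² u|
  have hS0 : (∑ l, |dt' (dt' (u l)) t x|) ≤ 1 := by
    have hterm : ∀ j : Fin N, |dt' (dt' (u j)) t x| ≤ ∑ l, |dt' (dt' (u l)) t x| :=
      fun j => Finset.single_le_sum (f := fun l => |dt' (dt' (u l)) t x|)
        (fun l _ => abs_nonneg _) (Finset.mem_univ j)
    have hS0nn : 0 ≤ ∑ l, |dt' (dt' (u l)) t x| :=
      Finset.sum_nonneg fun l _ => abs_nonneg _
    have hl : ∀ l : Fin N, |dt' (dt' (u l)) t x|
        ≤ (c l)^2*(3*ε) + ((∑ q : QIx N, |Gco G l q|)*(ε*(ε + ∑ l, |dt' (dt' (u l)) t x|))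
            + (∑ r : HIx N, |Hco H l r|)*(ε*ε)) := by
      intro l
      rw [sol_flat hsol l ht x]
      have h1 := abs_add_le ((c l)^2 * (∑ m, dx' m (dx' m (u l)) t x))
        ((∑ q : QIx N, Gco G l q * (AqF u q t x * BqF u q t x))
          + ∑ r : HIx N, Hco H l r * (ArF u r t x * BrF u r t x))
      have h2 := abs_add_le (∑ q : QIx N, Gco G l q * (AqF u q t x * BqF u q t x))
        (∑ r : HIx N, Hco H l r * (ArF u r t x * BrF u r t x))
      have e1 : |(c l)^2 * (∑ m, dx' m (dx' m (u l)) t x)| ≤ (c l)^2 * (3*ε) := by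
        rw [abs_mul, abs_of_nonneg (sq_nonneg (c l))]
        refine mul_le_mul_of_nonneg_left ?_ (sq_nonneg (c l))
        refine le_trans (Finset.abs_sum_le_sum_abs _ _) ?_
        have : ∀ m : Fin 3, |dx' m (dx' m (u l)) t x| ≤ ε := by
          intro m
          have h := hdd l m m.succ
          rw [pd'_succ] at h
          exact h
        calc (∑ m : Fin 3, |dx' m (dx' m (u l)) t x|) ≤ ∑ _m : Fin 3, ε :=
              Finset.sum_le_sum fun m _ => this m
          _ = 3*ε := by simp [mul_comm]
      have e2 : |(∑ q : QIx N, Gco G l q * (AqF u q t x * BqF u q t x))|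
          ≤ (∑ q : QIx N, |Gco G l q|)*(ε*(ε + ∑ l, |dt' (dt' (u l)) t x|)) := by
        refine sum_quad_bound (Gco G l) _ _ (fun q => hA1 q.1 q.2.2.1) (fun q => ?_)
          (by linarith)
        exact le_trans (hBval q.2.1 q.2.2.2.1 q.2.2.2.2)
          (by linarith [hterm q.2.1])
      have e3 : |(∑ r : HIx N, Hco H l r * (ArF u r t x * BrF u r t x))|
          ≤ (∑ r : HIx N, |Hco H l r|)*(ε*ε) := by
        refine sum_quad_bound (Hco H l) _ _ (fun r => hA1 r.1 r.2.2.1)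
          (fun r => hA1 r.2.1 r.2.2.2) hε0.le
      linarith
    have hsum := Finset.sum_le_sum (s := Finset.univ) fun l _ => hl l
    rw [Finset.sum_add_distrib, Finset.sum_add_distrib, ← Finset.sum_mul, ← Finset.sum_mul,
      ← Finset.sum_mul] at hsum
    rw [← hKCdef, ← hKGdef, ← hKHdef] at hsum
    obtain ⟨S0, hS0eq⟩ : ∃ y : ℝ, y = ∑ l, |dt' (dt' (u l)) t x| := ⟨_, rfl⟩
    rw [← hS0eq] at hsum hS0nn ⊢
    have f1 : KC*(3*ε) ≤ 3/8 := by
      have : KC*(3*ε) = 3*(KC*ε) := by ring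
      linarith
    have f2 : KG*(ε*(ε + S0)) ≤ (1/8)*(1 + S0) := by
      have g1 : KG*(ε*(ε + S0)) = (KG*ε)*(ε + S0) := by ring
      have g2 : (KG*ε)*(ε + S0) ≤ (1/8)*(ε + S0) :=
        mul_le_mul_of_nonneg_right hKGε (by linarith)
      linarith
    have f3 : KH*(ε*ε) ≤ 1/8 := by
      have g1 : KH*(ε*ε) = (KH*ε)*ε := by ring
      have g2 : (KH*ε)*ε ≤ (1/8)*1 := by
        refine mul_le_mul hKHε hε1 hε0.le (by norm_num)
      linarith
    linarith

  -- per-component second time derivative bound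
  have hdd2 : ∀ j : Fin N, |dt' (dt' (u j)) t x| ≤ 1 := fun j =>
    le_trans (Finset.single_le_sum (f := fun l => |dt' (dt' (u l)) t x|)
      (fun l _ => abs_nonneg _) (Finset.mem_univ j)) hS0
  have hB2' : ∀ q : QIx N, |BqF u q t x| ≤ 2 := by
    intro q
    simp only [BqF]
    refine (hBval q.2.1 q.2.2.2.1 q.2.2.2.2).trans ?_
    have := hdd2 q.2.1
    linarith
  -- point quantities
  obtain ⟨T1, hT1⟩ : ∃ f : (Fin 3 ⊕ Fin 3 × Fin 3) → ℝ,
      f = fun g => ∑ i, ∑ α : Fin 4, |zg g (pd' α (u i)) t x| := ⟨_, rfl⟩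
  obtain ⟨T2, hT2⟩ : ∃ f : (Fin 3 ⊕ Fin 3 × Fin 3) → ℝ,
      f = fun g => ∑ i, ∑ m : Fin 3, ∑ α : Fin 4, |zg g (dx' m (pd' α (u i))) t x| := ⟨_, rfl⟩
  obtain ⟨X, hX⟩ : ∃ f : (Fin 3 ⊕ Fin 3 × Fin 3) → ℝ,
      f = fun g => ∑ l, |zg g (dt' (dt' (u l))) t x| := ⟨_, rfl⟩
  obtain ⟨U1, hU1⟩ : ∃ f : (Fin 3 ⊕ Fin 3 × Fin 3) → (Fin 3 ⊕ Fin 3 × Fin 3) → ℝ,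
      f = fun g g' => ∑ i, ∑ α : Fin 4, |zg g (zg g' (pd' α (u i))) t x| := ⟨_, rfl⟩
  obtain ⟨U2, hU2⟩ : ∃ f : (Fin 3 ⊕ Fin 3 × Fin 3) → (Fin 3 ⊕ Fin 3 × Fin 3) → ℝ,
      f = fun g g' => ∑ i, ∑ m : Fin 3, ∑ α : Fin 4,
        |zg g (zg g' (dx' m (pd' α (u i)))) t x| := ⟨_, rfl⟩
  obtain ⟨Y, hY⟩ : ∃ f : (Fin 3 ⊕ Fin 3 × Fin 3) → (Fin 3 ⊕ Fin 3 × Fin 3) → ℝ,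
      f = fun g g' => ∑ l, |zg g (zg g' (dt' (dt' (u l)))) t x| := ⟨_, rfl⟩
  have hT1nn : ∀ g, 0 ≤ T1 g := by
    intro g; simp only [hT1]; positivity
  have hT2nn : ∀ g, 0 ≤ T2 g := by
    intro g; simp only [hT2]; positivity
  have hXnn : ∀ g, 0 ≤ X g := by
    intro g; simp only [hX]; positivity
  have hU1nn : ∀ g g', 0 ≤ U1 g g' := by
    intro g g'; simp only [hU1]; positivity
  have hU2nn : ∀ g g', 0 ≤ U2 g g' := by
    intro g g'; simp only [hU2]; positivity
  have hYnn : ∀ g g', 0 ≤ Y g g' := by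
    intro g g'; simp only [hY]; positivity
  -- single-term bounds
  have hZA : ∀ g (i : Fin N) (α : Fin 4), |zg g (pd' α (u i)) t x| ≤ T1 g := by
    intro g i α; simp only [hT1]
    exact single_le_sum2 (fun i α => |zg g (pd' α (u i)) t x|) (fun _ _ => abs_nonneg _) i α
  have hZD : ∀ g (i : Fin N) (m : Fin 3) (α : Fin 4),
      |zg g (dx' m (pd' α (u i))) t x| ≤ T2 g := by
    intro g i m α; simp only [hT2]
    exact single_le_sum3 (fun i m α => |zg g (dx' m (pd' α (u i))) t x|)
      (fun _ _ _ => abs_nonneg _) i m α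
  have hXt : ∀ g (j : Fin N), |zg g (dt' (dt' (u j))) t x| ≤ X g := by
    intro g j; simp only [hX]
    exact Finset.single_le_sum (f := fun l => |zg g (dt' (dt' (u l))) t x|)
      (fun l _ => abs_nonneg _) (Finset.mem_univ j)
  have hZZA : ∀ g g' (i : Fin N) (α : Fin 4),
      |zg g (zg g' (pd' α (u i))) t x| ≤ U1 g g' := by
    intro g g' i α; simp only [hU1]
    exact single_le_sum2 (fun i α => |zg g (zg g' (pd' α (u i))) t x|)
      (fun _ _ => abs_nonneg _) i α
  have hZZD : ∀ g g' (i : Fin N) (m : Fin 3) (α : Fin 4),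
      |zg g (zg g' (dx' m (pd' α (u i)))) t x| ≤ U2 g g' := by
    intro g g' i m α; simp only [hU2]
    exact single_le_sum3 (fun i m α => |zg g (zg g' (dx' m (pd' α (u i)))) t x|)
      (fun _ _ _ => abs_nonneg _) i m α
  have hYt : ∀ g g' (j : Fin N), |zg g (zg g' (dt' (dt' (u j)))) t x| ≤ Y g g' := by
    intro g g' j; simp only [hY]
    exact Finset.single_le_sum (f := fun l => |zg g (zg g' (dt' (dt' (u l)))) t x|)
      (fun l _ => abs_nonneg _) (Finset.mem_univ j)
  -- Z-derivative of mixed second derivatives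
  have hZB : ∀ g (j : Fin N) (β γ : Fin 4),
      |zg g (pd' β (pd' γ (u j))) t x| ≤ T2 g + X g := by
    intro g j β γ
    induction β using Fin.cases with
    | zero =>
      rw [pd'_zero]
      induction γ using Fin.cases with
      | zero =>
        rw [pd'_zero]
        linarith [hXt g j, hT2nn g]
      | succ m =>
        rw [pd'_succ]
        have hcm : ∀ z, dt' (dx' m (u j)) t z = dx' m (dt' (u j)) t z :=
          fun z => dt_dx_comm hΩ (hu j) m (hpt z)
        rw [zg_congr (g := dx' m (dt' (u j))) g hcm]
        have h := hZD g j m 0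
        rw [pd'_zero] at h
        linarith [hXnn g]
    | succ m =>
      rw [pd'_succ]
      have h := hZD g j m γ
      linarith [hXnn g]
  have hZZB : ∀ g g' (j : Fin N) (β γ : Fin 4),
      |zg g (zg g' (pd' β (pd' γ (u j)))) t x| ≤ U2 g g' + Y g g' := by
    intro g g' j β γ
    induction β using Fin.cases with
    | zero =>
      rw [pd'_zero]
      induction γ using Fin.cases with
      | zero =>
        rw [pd'_zero]
        linarith [hYt g g' j, hU2nn g g']
      | succ m =>
        rw [pd'_succ]
        have hcm : ∀ z, dt' (dx' m (u j)) t z = dx' m (dt' (u j)) t z :=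
          fun z => dt_dx_comm hΩ (hu j) m (hpt z)
        have hcm2 : ∀ z, zg g' (dt' (dx' m (u j))) t z = zg g' (dx' m (dt' (u j))) t z :=
          fun z => zg_congr (g := dx' m (dt' (u j))) g' hcm
        rw [zg_congr (g := zg g' (dx' m (dt' (u j)))) g hcm2]
        have h := hZZD g g' j m 0
        rw [pd'_zero] at h
        linarith [hYnn g g']
    | succ m =>
      rw [pd'_succ]
      have h := hZZD g g' j m γ
      linarith [hYnn g g']
  -- PART 1 core estimate
  have part1core : ∀ g, X g ≤ KC*(3*T2 g)
      + ((KG*(T1 g*2) + KG*(ε*(T2 g + X g))) + (KH*(T1 g*1) + KH*(ε*(T1 g)))) := by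
    intro g
    have hl : ∀ l : Fin N, |zg g (dt' (dt' (u l))) t x|
        ≤ (c l)^2*(3*T2 g)
          + (((∑ q : QIx N, |Gco G l q|)*(T1 g*2)
              + (∑ q : QIx N, |Gco G l q|)*(ε*(T2 g + X g)))
            + ((∑ r : HIx N, |Hco H l r|)*(T1 g*1)
              + (∑ r : HIx N, |Hco H l r|)*(ε*(T1 g)))) := by
      intro l
      rw [expand1 hsm hsol ht g l x]
      refine (abs_add5 _ _ _ _ _).trans ?_
      refine add_le_add ?_ (add_le_add (add_le_add ?_ ?_) (add_le_add ?_ ?_))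
      · rw [abs_mul, abs_of_nonneg (sq_nonneg (c l))]
        refine mul_le_mul_of_nonneg_left ?_ (sq_nonneg (c l))
        refine le_trans (Finset.abs_sum_le_sum_abs _ _) ?_
        have hm : ∀ m : Fin 3, |zg g (dx' m (dx' m (u l))) t x| ≤ T2 g := by
          intro m
          have h := hZD g l m m.succ
          rw [pd'_succ] at h
          exact h
        calc (∑ m : Fin 3, |zg g (dx' m (dx' m (u l))) t x|) ≤ ∑ _m : Fin 3, T2 g :=
              Finset.sum_le_sum fun m _ => hm m
          _ = 3*T2 g := by simp [mul_comm]
      · exact sum_quad_bound (Gco G l) _ _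
          (fun q => by simp only [AqF]; exact hZA g q.1 q.2.2.1) hB2' (by norm_num)
      · exact sum_quad_bound (Gco G l) _ _
          (fun q => by simp only [AqF]; exact hA1 q.1 q.2.2.1)
          (fun q => by simp only [BqF]; exact hZB g q.2.1 q.2.2.2.1 q.2.2.2.2)
          (add_nonneg (hT2nn g) (hXnn g))
      · exact sum_quad_bound (Hco H l) _ _
          (fun r => by simp only [ArF]; exact hZA g r.1 r.2.2.1)
          (fun r => by simp only [BrF]; exact le_trans (hA1 r.2.1 r.2.2.2) hε1)
          (by norm_num)
      · exact sum_quad_bound (Hco H l) _ _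
          (fun r => by simp only [ArF]; exact hA1 r.1 r.2.2.1)
          (fun r => by simp only [BrF]; exact hZA g r.2.1 r.2.2.2) (hT1nn g)
    have hsum := Finset.sum_le_sum (s := Finset.univ) fun l _ => hl l
    rw [Finset.sum_add_distrib, Finset.sum_add_distrib, Finset.sum_add_distrib,
      Finset.sum_add_distrib, ← Finset.sum_mul, ← Finset.sum_mul, ← Finset.sum_mul,
      ← Finset.sum_mul, ← Finset.sum_mul, ← hKCdef, ← hKGdef, ← hKHdef] at hsum
    calc X g = ∑ l, |zg g (dt' (dt' (u l))) t x| := by simp only [hX]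
      _ ≤ _ := hsum
  -- PART 1 absorbed
  have part1X : ∀ g, X g ≤ 5*K*(T1 g + T2 g) := by
    intro g
    have c1 : KC*(3*T2 g) ≤ 3*(K*T2 g) := by
      have h := mul_le_mul_of_nonneg_right (by linarith : KC ≤ K) (hT2nn g)
      have e : KC*(3*T2 g) = 3*(KC*T2 g) := by ring
      linarith
    have c2 : KG*(T1 g*2) ≤ 2*(K*T1 g) := by
      have h := mul_le_mul_of_nonneg_right (by linarith : KG ≤ K) (hT1nn g)
      have e : KG*(T1 g*2) = 2*(KG*T1 g) := by ring
      linarith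
    have c3 : KG*(ε*(T2 g + X g)) ≤ (1/8)*(T2 g + X g) := by
      have h := mul_le_mul_of_nonneg_right hKGε (add_nonneg (hT2nn g) (hXnn g))
      have e : KG*(ε*(T2 g + X g)) = (KG*ε)*(T2 g + X g) := by ring
      linarith
    have c4 : KH*(T1 g*1) ≤ K*T1 g := by
      have h := mul_le_mul_of_nonneg_right (by linarith : KH ≤ K) (hT1nn g)
      have e : KH*(T1 g*1) = KH*T1 g := by ring
      linarith
    have c5 : KH*(ε*(T1 g)) ≤ (1/8)*(T1 g) := by
      have h := mul_le_mul_of_nonneg_right hKHε (hT1nn g)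
      have e : KH*(ε*(T1 g)) = (KH*ε)*T1 g := by ring
      linarith
    have f1 : T1 g ≤ K*T1 g := by
      have h := mul_le_mul_of_nonneg_right hK1 (hT1nn g)
      rw [one_mul] at h; exact h
    have f2 : T2 g ≤ K*T2 g := by
      have h := mul_le_mul_of_nonneg_right hK1 (hT2nn g)
      rw [one_mul] at h; exact h
    have hgoal : 5*K*(T1 g + T2 g) = 5*(K*T1 g) + 5*(K*T2 g) := by ring
    have := part1core g
    rw [hgoal]
    linarith [hT1nn g, hT2nn g, hXnn g]

  -- RHS quantities
  obtain ⟨R1, hR1⟩ : ∃ y : ℝ, y = ∑ i, ∑ g : Fin 3 ⊕ (Fin 3 × Fin 3),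
      ((∑ m : Fin 3, ∑ α : Fin 4, |zg g (dx' m (pd' α (u i))) t x|)
        + ∑ α : Fin 4, |zg g (pd' α (u i)) t x|) := ⟨_, rfl⟩
  obtain ⟨R2b, hR2b⟩ : ∃ y : ℝ, y = ∑ i, ∑ g : Fin 3 ⊕ (Fin 3 × Fin 3),
      ∑ g' : Fin 3 ⊕ (Fin 3 × Fin 3),
      ((∑ m : Fin 3, ∑ α : Fin 4, |zg g (zg g' (dx' m (pd' α (u i)))) t x|)
        + ∑ α : Fin 4, |zg g (zg g' (pd' α (u i))) t x|) := ⟨_, rfl⟩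
  have hR1nn : 0 ≤ R1 := by
    rw [hR1]
    refine Finset.sum_nonneg fun i _ => Finset.sum_nonneg fun g _ => add_nonneg ?_ ?_
    · exact Finset.sum_nonneg fun m _ => Finset.sum_nonneg fun α _ => abs_nonneg _
    · exact Finset.sum_nonneg fun α _ => abs_nonneg _
  have hR2bnn : 0 ≤ R2b := by
    rw [hR2b]
    refine Finset.sum_nonneg fun i _ => Finset.sum_nonneg fun g _ =>
      Finset.sum_nonneg fun g' _ => add_nonneg ?_ ?_
    · exact Finset.sum_nonneg fun m _ => Finset.sum_nonneg fun α _ => abs_nonneg _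
    · exact Finset.sum_nonneg fun α _ => abs_nonneg _
  have hTR1 : ∀ g, T2 g + T1 g ≤ R1 := by
    intro g
    rw [hR1]
    have step : ∀ i : Fin N,
        ((∑ m : Fin 3, ∑ α : Fin 4, |zg g (dx' m (pd' α (u i))) t x|)
          + ∑ α : Fin 4, |zg g (pd' α (u i)) t x|)
        ≤ ∑ g' : Fin 3 ⊕ (Fin 3 × Fin 3),
            ((∑ m : Fin 3, ∑ α : Fin 4, |zg g' (dx' m (pd' α (u i))) t x|)
              + ∑ α : Fin 4, |zg g' (pd' α (u i)) t x|) := by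
      intro i
      exact Finset.single_le_sum
        (f := fun g' => (∑ m : Fin 3, ∑ α : Fin 4, |zg g' (dx' m (pd' α (u i))) t x|)
          + ∑ α : Fin 4, |zg g' (pd' α (u i)) t x|)
        (fun g' _ => add_nonneg
          (Finset.sum_nonneg fun m _ => Finset.sum_nonneg fun α _ => abs_nonneg _)
          (Finset.sum_nonneg fun α _ => abs_nonneg _)) (Finset.mem_univ g)
    calc T2 g + T1 g
        = ∑ i, ((∑ m : Fin 3, ∑ α : Fin 4, |zg g (dx' m (pd' α (u i))) t x|)
            + ∑ α : Fin 4, |zg g (pd' α (u i)) t x|) := by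
          simp only [hT1, hT2]
          rw [← Finset.sum_add_distrib]
      _ ≤ _ := Finset.sum_le_sum fun i _ => step i
  have hUR2 : ∀ g g', U2 g g' + U1 g g' ≤ R2b := by
    intro g g'
    rw [hR2b]
    have step : ∀ i : Fin N,
        ((∑ m : Fin 3, ∑ α : Fin 4, |zg g (zg g' (dx' m (pd' α (u i)))) t x|)
          + ∑ α : Fin 4, |zg g (zg g' (pd' α (u i))) t x|)
        ≤ ∑ h : Fin 3 ⊕ (Fin 3 × Fin 3), ∑ h' : Fin 3 ⊕ (Fin 3 × Fin 3),
            ((∑ m : Fin 3, ∑ α : Fin 4, |zg h (zg h' (dx' m (pd' α (u i)))) t x|)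
              + ∑ α : Fin 4, |zg h (zg h' (pd' α (u i))) t x|) := by
      intro i
      exact single_le_sum2
        (fun h h' => (∑ m : Fin 3, ∑ α : Fin 4, |zg h (zg h' (dx' m (pd' α (u i)))) t x|)
          + ∑ α : Fin 4, |zg h (zg h' (pd' α (u i))) t x|)
        (fun h h' => add_nonneg
          (Finset.sum_nonneg fun m _ => Finset.sum_nonneg fun α _ => abs_nonneg _)
          (Finset.sum_nonneg fun α _ => abs_nonneg _)) g g'
    calc U2 g g' + U1 g g'
        = ∑ i, ((∑ m : Fin 3, ∑ α : Fin 4, |zg g (zg g' (dx' m (pd' α (u i)))) t x|)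
            + ∑ α : Fin 4, |zg g (zg g' (pd' α (u i))) t x|) := by
          simp only [hU1, hU2]
          rw [← Finset.sum_add_distrib]
      _ ≤ _ := Finset.sum_le_sum fun i _ => step i
  constructor
  · -- PART 1 conclusion
    intro g₁
    have h1 : (∑ i, |zg g₁ (dt' (dt' (u i))) t x|) = X g₁ := by simp only [hX]
    rw [h1, ← hR1]
    have h2 := part1X g₁
    have h3 : 5*K*(T1 g₁ + T2 g₁) ≤ 5*(K*R1) := by
      have e : 5*K*(T1 g₁ + T2 g₁) = 5*(K*(T1 g₁ + T2 g₁)) := by ring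
      have h := mul_le_mul_of_nonneg_left (by linarith [hTR1 g₁] : T1 g₁ + T2 g₁ ≤ R1) hK0.le
      linarith
    have h4 : 0 ≤ K*R1 := mul_nonneg hK0.le hR1nn
    have e2 : 16*K*R1 = 16*(K*R1) := by ring
    linarith
  · -- PART 2
    intro g₁ g₂
    have hl : ∀ l : Fin N, |zg g₁ (zg g₂ (dt' (dt' (u l)))) t x|
        ≤ (c l)^2*(3*U2 g₁ g₂)
          + ((((∑ q : QIx N, |Gco G l q|)*(U1 g₁ g₂*2)
              + (∑ q : QIx N, |Gco G l q|)*(ε*(T2 g₂ + X g₂)))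
            + ((∑ q : QIx N, |Gco G l q|)*(ε*(T2 g₁ + X g₁))
              + (∑ q : QIx N, |Gco G l q|)*(ε*(U2 g₁ g₂ + Y g₁ g₂))))
          + (((∑ r : HIx N, |Hco H l r|)*(U1 g₁ g₂*1)
              + (∑ r : HIx N, |Hco H l r|)*(ε*(T1 g₂)))
            + ((∑ r : HIx N, |Hco H l r|)*(ε*(T1 g₁))
              + (∑ r : HIx N, |Hco H l r|)*(ε*(U1 g₁ g₂))))) := by
      intro l
      rw [expand2 hsm hsol ht g₁ g₂ l x]
      refine (abs_add9 _ _ _ _ _ _ _ _ _).trans ?_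
      refine add_le_add ?_ (add_le_add (add_le_add (add_le_add ?_ ?_) (add_le_add ?_ ?_))
        (add_le_add (add_le_add ?_ ?_) (add_le_add ?_ ?_)))
      · rw [abs_mul, abs_of_nonneg (sq_nonneg (c l))]
        refine mul_le_mul_of_nonneg_left ?_ (sq_nonneg (c l))
        refine le_trans (Finset.abs_sum_le_sum_abs _ _) ?_
        have hm : ∀ m : Fin 3, |zg g₁ (zg g₂ (dx' m (dx' m (u l)))) t x| ≤ U2 g₁ g₂ := by
          intro m
          have h := hZZD g₁ g₂ l m m.succ
          rw [pd'_succ] at h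
          exact h
        calc (∑ m : Fin 3, |zg g₁ (zg g₂ (dx' m (dx' m (u l)))) t x|)
            ≤ ∑ _m : Fin 3, U2 g₁ g₂ := Finset.sum_le_sum fun m _ => hm m
          _ = 3*U2 g₁ g₂ := by simp [mul_comm]
      · exact sum_quad_bound (Gco G l) _ _
          (fun q => by simp only [AqF]; exact hZZA g₁ g₂ q.1 q.2.2.1) hB2' (by norm_num)
      · exact sum_quad_bound (Gco G l) _ _
          (fun q => by simp only [AqF]; exact hA2 q.1 q.2.2.1 g₁)
          (fun q => by simp only [BqF]; exact hZB g₂ q.2.1 q.2.2.2.1 q.2.2.2.2)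
          (add_nonneg (hT2nn g₂) (hXnn g₂))
      · exact sum_quad_bound (Gco G l) _ _
          (fun q => by simp only [AqF]; exact hA2 q.1 q.2.2.1 g₂)
          (fun q => by simp only [BqF]; exact hZB g₁ q.2.1 q.2.2.2.1 q.2.2.2.2)
          (add_nonneg (hT2nn g₁) (hXnn g₁))
      · exact sum_quad_bound (Gco G l) _ _
          (fun q => by simp only [AqF]; exact hA1 q.1 q.2.2.1)
          (fun q => by simp only [BqF]; exact hZZB g₁ g₂ q.2.1 q.2.2.2.1 q.2.2.2.2)
          (add_nonneg (hU2nn g₁ g₂) (hYnn g₁ g₂))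
      · exact sum_quad_bound (Hco H l) _ _
          (fun r => by simp only [ArF]; exact hZZA g₁ g₂ r.1 r.2.2.1)
          (fun r => by simp only [BrF]; exact le_trans (hA1 r.2.1 r.2.2.2) hε1)
          (by norm_num)
      · exact sum_quad_bound (Hco H l) _ _
          (fun r => by simp only [ArF]; exact hA2 r.1 r.2.2.1 g₁)
          (fun r => by simp only [BrF]; exact hZA g₂ r.2.1 r.2.2.2) (hT1nn g₂)
      · exact sum_quad_bound (Hco H l) _ _
          (fun r => by simp only [ArF]; exact hA2 r.1 r.2.2.1 g₂)
          (fun r => by simp only [BrF]; exact hZA g₁ r.2.1 r.2.2.2) (hT1nn g₁)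
      · exact sum_quad_bound (Hco H l) _ _
          (fun r => by simp only [ArF]; exact hA1 r.1 r.2.2.1)
          (fun r => by simp only [BrF]; exact hZZA g₁ g₂ r.2.1 r.2.2.2) (hU1nn g₁ g₂)
    have hsum := Finset.sum_le_sum (s := Finset.univ) fun l _ => hl l
    rw [Finset.sum_add_distrib, Finset.sum_add_distrib, Finset.sum_add_distrib,
      Finset.sum_add_distrib, Finset.sum_add_distrib, Finset.sum_add_distrib,
      Finset.sum_add_distrib, Finset.sum_add_distrib,
      ← Finset.sum_mul, ← Finset.sum_mul, ← Finset.sum_mul, ← Finset.sum_mul,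
      ← Finset.sum_mul, ← Finset.sum_mul, ← Finset.sum_mul, ← Finset.sum_mul,
      ← Finset.sum_mul, ← hKCdef, ← hKGdef, ← hKHdef] at hsum
    have hYle : Y g₁ g₂ ≤ KC*(3*U2 g₁ g₂)
        + (((KG*(U1 g₁ g₂*2) + KG*(ε*(T2 g₂ + X g₂)))
            + (KG*(ε*(T2 g₁ + X g₁)) + KG*(ε*(U2 g₁ g₂ + Y g₁ g₂))))
          + ((KH*(U1 g₁ g₂*1) + KH*(ε*(T1 g₂)))
            + (KH*(ε*(T1 g₁)) + KH*(ε*(U1 g₁ g₂))))) := by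
      calc Y g₁ g₂ = ∑ l, |zg g₁ (zg g₂ (dt' (dt' (u l)))) t x| := by simp only [hY]
        _ ≤ _ := hsum
    clear hl hsum
    -- arithmetic absorption
    have d1 : KC*(3*U2 g₁ g₂) ≤ 3*(K*U2 g₁ g₂) := by
      have h := mul_le_mul_of_nonneg_right (by linarith : KC ≤ K) (hU2nn g₁ g₂)
      have e : KC*(3*U2 g₁ g₂) = 3*(KC*U2 g₁ g₂) := by ring
      linarith
    have d2 : KG*(U1 g₁ g₂*2) ≤ 2*(K*U1 g₁ g₂) := by
      have h := mul_le_mul_of_nonneg_right (by linarith : KG ≤ K) (hU1nn g₁ g₂)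
      have e : KG*(U1 g₁ g₂*2) = 2*(KG*U1 g₁ g₂) := by ring
      linarith
    have d3 : KG*(ε*(T2 g₂ + X g₂)) ≤ (1/8)*(T2 g₂ + X g₂) := by
      have h := mul_le_mul_of_nonneg_right hKGε (add_nonneg (hT2nn g₂) (hXnn g₂))
      have e : KG*(ε*(T2 g₂ + X g₂)) = (KG*ε)*(T2 g₂ + X g₂) := by ring
      linarith
    have d4 : KG*(ε*(T2 g₁ + X g₁)) ≤ (1/8)*(T2 g₁ + X g₁) := by
      have h := mul_le_mul_of_nonneg_right hKGε (add_nonneg (hT2nn g₁) (hXnn g₁))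
      have e : KG*(ε*(T2 g₁ + X g₁)) = (KG*ε)*(T2 g₁ + X g₁) := by ring
      linarith
    have d5 : KG*(ε*(U2 g₁ g₂ + Y g₁ g₂)) ≤ (1/8)*(U2 g₁ g₂ + Y g₁ g₂) := by
      have h := mul_le_mul_of_nonneg_right hKGε (add_nonneg (hU2nn g₁ g₂) (hYnn g₁ g₂))
      have e : KG*(ε*(U2 g₁ g₂ + Y g₁ g₂)) = (KG*ε)*(U2 g₁ g₂ + Y g₁ g₂) := by ring
      linarith
    have d6 : KH*(U1 g₁ g₂*1) ≤ K*U1 g₁ g₂ := by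
      have h := mul_le_mul_of_nonneg_right (by linarith : KH ≤ K) (hU1nn g₁ g₂)
      have e : KH*(U1 g₁ g₂*1) = KH*U1 g₁ g₂ := by ring
      linarith
    have d7 : KH*(ε*(T1 g₂)) ≤ (1/8)*(T1 g₂) := by
      have h := mul_le_mul_of_nonneg_right hKHε (hT1nn g₂)
      have e : KH*(ε*(T1 g₂)) = (KH*ε)*T1 g₂ := by ring
      linarith
    have d8 : KH*(ε*(T1 g₁)) ≤ (1/8)*(T1 g₁) := by
      have h := mul_le_mul_of_nonneg_right hKHε (hT1nn g₁)
      have e : KH*(ε*(T1 g₁)) = (KH*ε)*T1 g₁ := by ring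
      linarith
    have d9 : KH*(ε*(U1 g₁ g₂)) ≤ (1/8)*(U1 g₁ g₂) := by
      have h := mul_le_mul_of_nonneg_right hKHε (hU1nn g₁ g₂)
      have e : KH*(ε*(U1 g₁ g₂)) = (KH*ε)*U1 g₁ g₂ := by ring
      linarith
    have p1 := part1X g₁
    have p2 := part1X g₂
    have er1 : 5*K*(T1 g₁ + T2 g₁) = 5*(K*T1 g₁) + 5*(K*T2 g₁) := by ring
    have er2 : 5*K*(T1 g₂ + T2 g₂) = 5*(K*T1 g₂) + 5*(K*T2 g₂) := by ring
    have f1 : T1 g₁ ≤ K*T1 g₁ := by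
      have h := mul_le_mul_of_nonneg_right hK1 (hT1nn g₁); rw [one_mul] at h; exact h
    have f2 : T2 g₁ ≤ K*T2 g₁ := by
      have h := mul_le_mul_of_nonneg_right hK1 (hT2nn g₁); rw [one_mul] at h; exact h
    have f3 : T1 g₂ ≤ K*T1 g₂ := by
      have h := mul_le_mul_of_nonneg_right hK1 (hT1nn g₂); rw [one_mul] at h; exact h
    have f4 : T2 g₂ ≤ K*T2 g₂ := by
      have h := mul_le_mul_of_nonneg_right hK1 (hT2nn g₂); rw [one_mul] at h; exact h
    have f5 : U1 g₁ g₂ ≤ K*U1 g₁ g₂ := by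
      have h := mul_le_mul_of_nonneg_right hK1 (hU1nn g₁ g₂); rw [one_mul] at h; exact h
    have f6 : U2 g₁ g₂ ≤ K*U2 g₁ g₂ := by
      have h := mul_le_mul_of_nonneg_right hK1 (hU2nn g₁ g₂); rw [one_mul] at h; exact h
    have b1 : K*T2 g₁ + K*T1 g₁ ≤ K*R1 := by
      have h := mul_le_mul_of_nonneg_left (hTR1 g₁) hK0.le
      have e : K*(T2 g₁ + T1 g₁) = K*T2 g₁ + K*T1 g₁ := by ring
      linarith
    have b2 : K*T2 g₂ + K*T1 g₂ ≤ K*R1 := by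
      have h := mul_le_mul_of_nonneg_left (hTR1 g₂) hK0.le
      have e : K*(T2 g₂ + T1 g₂) = K*T2 g₂ + K*T1 g₂ := by ring
      linarith
    have b3 : K*U2 g₁ g₂ + K*U1 g₁ g₂ ≤ K*R2b := by
      have h := mul_le_mul_of_nonneg_left (hUR2 g₁ g₂) hK0.le
      have e : K*(U2 g₁ g₂ + U1 g₁ g₂) = K*U2 g₁ g₂ + K*U1 g₁ g₂ := by ring
      linarith
    have hKR1nn : 0 ≤ K*R1 := mul_nonneg hK0.le hR1nn
    have hKR2bnn : 0 ≤ K*R2b := mul_nonneg hK0.le hR2bnn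
    -- final
    have hsplit : (∑ i, ((∑ g : Fin 3 ⊕ (Fin 3 × Fin 3),
          ((∑ m : Fin 3, ∑ α : Fin 4, |zg g (dx' m (pd' α (u i))) t x|)
            + ∑ α : Fin 4, |zg g (pd' α (u i)) t x|))
        + ∑ g : Fin 3 ⊕ (Fin 3 × Fin 3), ∑ g' : Fin 3 ⊕ (Fin 3 × Fin 3),
          ((∑ m : Fin 3, ∑ α : Fin 4, |zg g (zg g' (dx' m (pd' α (u i)))) t x|)
            + ∑ α : Fin 4, |zg g (zg g' (pd' α (u i))) t x|)))
        = R1 + R2b := by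
      rw [Finset.sum_add_distrib, ← hR1, ← hR2b]
    have h0 : (∑ i, |zg g₁ (zg g₂ (dt' (dt' (u i)))) t x|) = Y g₁ g₂ := by simp only [hY]
    rw [h0, hsplit]
    have e3 : 16*K*(R1 + R2b) = 16*(K*R1) + 16*(K*R2b) := by ring
    linarith
/-- under the same smallness condition as in Statement 11, for
every multi-index a with |a| ∈ {1,2} (expressed via one or two generators
from Z̄ = {∂_m, Ω_{ij}}),
Σ_i |Z̄^a ∂_t² u^i| ≤ C Σ_i Σ_{1≤|b|≤|a|} (Σ_{m,α} |Z̄^b ∂_m∂_α u^i| + Σ_α |Z̄^b ∂_α u^i|). -/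
theorem stmt_12 :
    ∀ (N : ℕ) (c : Fin N → ℝ)
      (G : Fin N → Fin N → Fin N → Fin 4 → Fin 4 → Fin 4 → ℝ)
      (H : Fin N → Fin N → Fin N → Fin 4 → Fin 4 → ℝ),
      (∀ l, 0 < c l) →
      ∃ εs > (0 : ℝ), ∃ C > (0 : ℝ),
        ∀ (T : ℝ) (u : Fin N → ℝ → Esp 3 → ℝ),
          SmoothSTOn u (Ioo 0 T) → IsSol3 c G H T u →
          ∀ t ∈ Ioo (0 : ℝ) T, ∀ x : Esp 3,
            ((∀ (i : Fin N) (α : Fin 4), |pd' α (u i) t x| ≤ εs) ∧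
             (∀ (i : Fin N) (α : Fin 4) (g : Fin 3 ⊕ (Fin 3 × Fin 3)),
               |zg g (pd' α (u i)) t x| ≤ εs)) →
            (∀ g₁ : Fin 3 ⊕ (Fin 3 × Fin 3),
              (∑ i, |zg g₁ (dt' (dt' (u i))) t x|)
                ≤ C * ∑ i, ∑ g : Fin 3 ⊕ (Fin 3 × Fin 3),
                    ((∑ m : Fin 3, ∑ α : Fin 4, |zg g (dx' m (pd' α (u i))) t x|)
                      + ∑ α : Fin 4, |zg g (pd' α (u i)) t x|)) ∧
            (∀ g₁ g₂ : Fin 3 ⊕ (Fin 3 × Fin 3),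
              (∑ i, |zg g₁ (zg g₂ (dt' (dt' (u i)))) t x|)
                ≤ C * ∑ i,
                    ((∑ g : Fin 3 ⊕ (Fin 3 × Fin 3),
                        ((∑ m : Fin 3, ∑ α : Fin 4, |zg g (dx' m (pd' α (u i))) t x|)
                          + ∑ α : Fin 4, |zg g (pd' α (u i)) t x|))
                     + ∑ g : Fin 3 ⊕ (Fin 3 × Fin 3), ∑ g' : Fin 3 ⊕ (Fin 3 × Fin 3),
                        ((∑ m : Fin 3, ∑ α : Fin 4,
                            |zg g (zg g' (dx' m (pd' α (u i)))) t x|)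
                          + ∑ α : Fin 4, |zg g (zg g' (pd' α (u i))) t x|))) := stmt_12'
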